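/- (Maximal contact passes to the coefficient ideal.) Let k be a field of characteristic zero, I a nonzero ideal of R = k[x_1,…,x_n], and p ∈ k^n a point with ord_p(I) = a ≥ 1. Then in the localization of R at the maximal ideal m_p, the image of the ideal D^{a-1}(I) is contained in the image of the ideal D^{a!-1}(C(I,a)). In particular, if x ∈ D^{a-1}(I) satisfies (∂x/∂x_i)(p) ≠ 0 for some i (i.e. x is a maximal contact element for I at p), then x is a maximal contact element for C(I,a) at p: its image lies in the localization of D^{a!-1}(C(I,a)) at m_p and some first partial derivative of x does not vanish at p. -/

import Mathlib

open MvPolynomial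

/-- The derivative ideal: the ideal generated by `I` together with all first partial
derivatives of its elements. -/
noncomputable def derivIdeal {k : Type*} [CommSemiring k] {σ : Type*}
    (I : Ideal (MvPolynomial σ k)) : Ideal (MvPolynomial σ k) :=
  I ⊔ Ideal.span {g | ∃ f ∈ I, ∃ i : σ, g = pderiv i f}

/-- The order of a nonzero polynomial at a point `p`: the smallest total degree of a monomial
appearing in the shifted polynomial `f(x+p)`. -/
noncomputable def polyOrdAt {k : Type*} [CommSemiring k] {σ : Type*} (p : σ → k)
    (f : MvPolynomial σ k) : ℕ :=
  sInf {m | ∃ d ∈ (aeval (fun i => X i + C (p i)) f : MvPolynomial σ k).support,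
    (d.sum fun _ e => e) = m}

/-- The order of a nonzero ideal at a point: `min {ord_p f : 0 ≠ f ∈ I}`. -/
noncomputable def idealOrdAt {k : Type*} [CommSemiring k] {σ : Type*} (p : σ → k)
    (I : Ideal (MvPolynomial σ k)) : ℕ :=
  sInf {m | ∃ f ∈ I, f ≠ 0 ∧ polyOrdAt p f = m}

/-- The coefficient ideal `C(I,a) = Σ D^{a-1}(I)^{b₁} ⋯ D⁰(I)^{b_a}`, the sum running over
all tuples `(b₁,…,b_a)` of nonnegative integers with `Σ i·b_i ≥ a!`. -/
noncomputable def coeffIdeal {k : Type*} [CommSemiring k] {σ : Type*}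
    (I : Ideal (MvPolynomial σ k)) (a : ℕ) : Ideal (MvPolynomial σ k) :=
  ⨆ b : {b : Fin a → ℕ // Nat.factorial a ≤ ∑ i, (i.1 + 1) * b i},
    ∏ i : Fin a, (derivIdeal^[a - (i.1 + 1)] I) ^ (b.1 i)

/-- The maximal ideal `m_p` of polynomials vanishing at the point `p`. -/
noncomputable def vanishingIdeal {k : Type*} [Field k] {σ : Type*} (p : σ → k) :
    Ideal (MvPolynomial σ k) :=
  RingHom.ker (eval p)

instance vanishingIdeal_isMaximal {k : Type*} [Field k] {σ : Type*} (p : σ → k) :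
    (vanishingIdeal p).IsMaximal :=
  RingHom.ker_isMaximal_of_surjective _ fun c => ⟨C c, eval_C _⟩

/-! ### Auxiliary lemmas -/

section Aux

variable {k : Type*} [CommSemiring k] {σ : Type*}

lemma MC.mem_derivIdeal {I : Ideal (MvPolynomial σ k)} {f : MvPolynomial σ k} (h : f ∈ I) :
    f ∈ derivIdeal I :=
  Ideal.mem_sup_left h

lemma MC.pderiv_mem_derivIdeal {I : Ideal (MvPolynomial σ k)} {f : MvPolynomial σ k}
    (i : σ) (h : f ∈ I) : pderiv i f ∈ derivIdeal I :=
  Ideal.mem_sup_right (Ideal.subset_span ⟨f, h, i, rfl⟩)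

lemma MC.iterate_mono {I : Ideal (MvPolynomial σ k)} {j r : ℕ} (h : j ≤ r) :
    derivIdeal^[j] I ≤ derivIdeal^[r] I := by
  induction r, h using Nat.le_induction with
  | base => exact le_rfl
  | succ r hr ih =>
    rw [Function.iterate_succ_apply']
    exact ih.trans le_sup_left

lemma MC.pderiv_mem_iterate {I : Ideal (MvPolynomial σ k)} {f : MvPolynomial σ k}
    (i : σ) {j : ℕ} (h : f ∈ derivIdeal^[j] I) : pderiv i f ∈ derivIdeal^[j + 1] I := by
  rw [Function.iterate_succ_apply']
  exact MC.pderiv_mem_derivIdeal i h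

lemma MC.pow_le_coeffIdeal (I : Ideal (MvPolynomial σ k)) {a : ℕ} (ha : 1 ≤ a) :
    (derivIdeal^[a - 1] I) ^ (Nat.factorial a) ≤ coeffIdeal I a := by
  classical
  have h0 : (0 : ℕ) < a := ha
  set i0 : Fin a := ⟨0, h0⟩ with hi0
  set b : Fin a → ℕ := fun i => if i = i0 then Nat.factorial a else 0 with hb
  have hsum : Nat.factorial a ≤ ∑ i : Fin a, (i.1 + 1) * b i := by
    have h1 : ∑ i : Fin a, (i.1 + 1) * b i = (i0.1 + 1) * Nat.factorial a := by
      rw [Finset.sum_eq_single i0]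
      · simp [hb]
      · intro j _ hj; simp [hb, hj]
      · intro h; exact absurd (Finset.mem_univ i0) h
    rw [h1, hi0]
    simp
  have hprod : ∏ i : Fin a, (derivIdeal^[a - (i.1 + 1)] I) ^ (b i)
      = (derivIdeal^[a - 1] I) ^ (Nat.factorial a) := by
    rw [Finset.prod_eq_single i0]
    · simp [hb, hi0]
    · intro j _ hj; simp [hb, hj]
    · intro h; exact absurd (Finset.mem_univ i0) h
  calc (derivIdeal^[a - 1] I) ^ (Nat.factorial a)
      = ∏ i : Fin a, (derivIdeal^[a - (i.1 + 1)] I) ^ (b i) := hprod.symm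
    _ ≤ coeffIdeal I a := le_iSup
        (fun b : {b : Fin a → ℕ // Nat.factorial a ≤ ∑ i, (i.1 + 1) * b i} =>
          ∏ i : Fin a, (derivIdeal^[a - (i.1 + 1)] I) ^ (b.1 i)) ⟨b, hsum⟩

lemma MC.coeff_pderiv (i : σ) (e : σ →₀ ℕ) (g : MvPolynomial σ k) :
    coeff e (pderiv i g) = coeff (e + Finsupp.single i 1) g * ((e i : k) + 1) := by
  classical
  induction g using MvPolynomial.induction_on' with
  | add q r hq hr => simp [hq, hr, add_mul]
  | monomial s c =>
    rw [pderiv_monomial, coeff_monomial, coeff_monomial]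
    by_cases hs : 1 ≤ s i
    · have hcancel : s - Finsupp.single i 1 + Finsupp.single i 1 = s :=
        tsub_add_cancel_of_le (Finsupp.single_le_iff.mpr hs)
      by_cases h1 : s - Finsupp.single i 1 = e
      · have h2 : s = e + Finsupp.single i 1 := by rw [← h1, hcancel]
        rw [if_pos h1, if_pos h2]
        have he : e i = s i - 1 := by rw [h2]; simp
        rw [he]
        have h3 : ((s i - 1 : ℕ) : k) + 1 = (s i : k) := by
          have h4 := Nat.succ_pred_eq_of_pos hs
          rw [← h4]
          push_cast
          ring
        rw [h3, mul_comm]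
      · have h2 : ¬ s = e + Finsupp.single i 1 := by
          intro h; apply h1; rw [h]; simp
        rw [if_neg h1, if_neg h2, zero_mul]
    · have hsi : s i = 0 := by omega
      have h2 : ¬ s = e + Finsupp.single i 1 := by
        intro h
        have := congrArg (fun f => f i) h
        simp [hsi] at this
      rw [if_neg h2, zero_mul]
      split_ifs with h1
      · simp [hsi]
      · rfl

lemma MC.pderiv_shift (p : σ → k) (i : σ) (f : MvPolynomial σ k) :
    pderiv i (aeval (fun j => X j + C (p j)) f) =
      aeval (fun j => X j + C (p j)) (pderiv i f) := by
  classical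
  induction f using MvPolynomial.induction_on with
  | C c => simp
  | add q r hq hr => simp only [map_add, hq, hr]
  | mul_X q j hq =>
    simp only [map_mul, pderiv_mul, hq, aeval_X, map_add, aeval_C, pderiv_X]
    by_cases h : i = j
    · subst h
      simp [pderiv_X_self]
    · simp [Pi.single_eq_of_ne' h, pderiv_X_of_ne (Ne.symm h)]

lemma MC.constantCoeff_shift (p : σ → k) (f : MvPolynomial σ k) :
    constantCoeff (aeval (fun j => X j + C (p j)) f) = eval p f := by
  induction f using MvPolynomial.induction_on with
  | C c => simp
  | add q r hq hr => simp only [map_add, hq, hr]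
  | mul_X q j hq =>
    rw [map_mul, map_mul, map_mul, hq, aeval_X, map_add, constantCoeff_X, constantCoeff_C,
      zero_add, eval_X]

lemma MC.eval_pderiv_shift (p : σ → k) (i : σ) (f : MvPolynomial σ k) :
    eval p (pderiv i f) =
      coeff (Finsupp.single i 1) (aeval (fun j => X j + C (p j)) f) := by
  rw [← MC.constantCoeff_shift p (pderiv i f), ← MC.pderiv_shift p i f]
  have h0 : (constantCoeff (pderiv i (aeval (fun j => X j + C (p j)) f)))
      = coeff 0 (pderiv i (aeval (fun j => X j + C (p j)) f)) := rfl
  rw [h0, MC.coeff_pderiv]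
  simp

lemma MC.deg_add (d e : σ →₀ ℕ) :
    ((d + e).sum fun _ n => n) = (d.sum fun _ n => n) + (e.sum fun _ n => n) :=
  Finsupp.sum_add_index' (fun _ => rfl) (fun _ _ _ => rfl)

lemma MC.deg_single (i : σ) : ((Finsupp.single i 1 : σ →₀ ℕ).sum fun _ n => n) = 1 := by
  simp

lemma MC.deg_pos_exists {d : σ →₀ ℕ} (h : 1 ≤ d.sum fun _ n => n) : ∃ i, 1 ≤ d i := by
  by_contra hc
  push_neg at hc
  have hz : ∀ i, d i = 0 := fun i => by have := hc i; omega
  have hd0 : d = 0 := Finsupp.ext fun i => by simp [hz i]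
  rw [hd0] at h
  simp [Finsupp.sum_zero_index] at h

lemma MC.deg_le (d : σ →₀ ℕ) (i : σ) : d i ≤ d.sum fun _ n => n := by
  by_cases h : d i = 0
  · simp [h]
  · exact Finset.single_le_sum (f := fun j => d j) (fun _ _ => Nat.zero_le _)
      (Finsupp.mem_support_iff.mpr h)

end Aux

section Mc

variable {k : Type*} [Field k] [CharZero k] {n : ℕ}

/-- Existence of a maximal contact element. -/
lemma MC.exists_maximal_contact (I : Ideal (MvPolynomial (Fin n) k)) (hI : I ≠ ⊥)
    (p : Fin n → k) (a : ℕ) (ha : 1 ≤ a) (hord : idealOrdAt p I = a) :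
    ∃ x ∈ derivIdeal^[a - 1] I, ∃ i : Fin n, eval p (pderiv i x) ≠ 0 := by
  classical
  set φ : MvPolynomial (Fin n) k → MvPolynomial (Fin n) k :=
    fun f => aeval (fun j => X j + C (p j)) f with hφ
  have hφinj : ∀ f, φ f = 0 → f = 0 := by
    have hcomp : ∀ f, aeval (fun j => X j - C (p j)) (φ f) = f := by
      intro f
      induction f using MvPolynomial.induction_on with
      | C c => simp [hφ]
      | add q r hq hr => simp only [hφ, map_add] at hq hr ⊢; rw [hq, hr]
      | mul_X q j hq =>
        simp only [hφ, map_mul, map_add, aeval_X, aeval_C, MvPolynomial.algebraMap_eq] at hq ⊢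
        rw [hq]
        ring
    intro f h
    have := hcomp f
    rw [h, map_zero] at this
    exact this.symm
  -- pick f of minimal order
  obtain ⟨f, hfI, hf0, hford⟩ : ∃ f ∈ I, f ≠ 0 ∧ polyOrdAt p f = a := by
    have hne : {m | ∃ f ∈ I, f ≠ 0 ∧ polyOrdAt p f = m}.Nonempty := by
      obtain ⟨f, hf, h0⟩ := Submodule.exists_mem_ne_zero_of_ne_bot hI
      exact ⟨_, f, hf, h0, rfl⟩
    have hmem := Nat.sInf_mem hne
    rw [idealOrdAt] at hord
    rw [hord] at hmem
    exact hmem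
  -- the main induction on the order
  have main : ∀ t r (g : MvPolynomial (Fin n) k), g ∈ derivIdeal^[r] I →
      (∃ d ∈ (φ g).support, (d.sum fun _ e => e) = t + 1) →
      (∀ d ∈ (φ g).support, t + 1 ≤ d.sum fun _ e => e) →
      ∃ x ∈ derivIdeal^[r + t] I, (∃ d ∈ (φ x).support, (d.sum fun _ e => e) = 1) ∧
        (∀ d ∈ (φ x).support, 1 ≤ d.sum fun _ e => e) := by
    intro t
    induction t with
    | zero =>
      intro r g hg h1 h2
      exact ⟨g, by simpa using hg, h1, h2⟩
    | succ t ih =>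
      rintro r g hg ⟨d, hd, hdeg⟩ h2
      obtain ⟨i, hi⟩ : ∃ i, 1 ≤ d i := MC.deg_pos_exists (by omega)
      set e : Fin n →₀ ℕ := d - Finsupp.single i 1 with he
      have hed : e + Finsupp.single i 1 = d :=
        tsub_add_cancel_of_le (Finsupp.single_le_iff.mpr hi)
      have hcoeff : coeff e (pderiv i (φ g)) = coeff d (φ g) * ((e i : k) + 1) := by
        rw [MC.coeff_pderiv, hed]
      have hcn : coeff e (pderiv i (φ g)) ≠ 0 := by
        rw [hcoeff]
        refine mul_ne_zero (mem_support_iff.mp hd) ?_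
        have hcast : ((e i : k) + 1) = ((e i + 1 : ℕ) : k) := by push_cast; ring
        rw [hcast]
        exact Nat.cast_ne_zero.mpr (Nat.succ_ne_zero _)
      have hdeg_e : (e.sum fun _ n => n) = t + 1 := by
        have h3 : (d.sum fun _ n => n) = (e.sum fun _ n => n) + 1 := by
          rw [← hed, MC.deg_add, MC.deg_single]
        omega
      have hlower : ∀ c ∈ (pderiv i (φ g)).support, t + 1 ≤ c.sum fun _ n => n := by
        intro c hc'
        have hnz : coeff (c + Finsupp.single i 1) (φ g) ≠ 0 := by
          intro h0
          apply mem_support_iff.mp hc'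
          rw [MC.coeff_pderiv, h0, zero_mul]
        have hmem : c + Finsupp.single i 1 ∈ (φ g).support := mem_support_iff.mpr hnz
        have h4 := h2 _ hmem
        rw [MC.deg_add, MC.deg_single] at h4
        omega
      have hφc : φ (pderiv i g) = pderiv i (φ g) := (MC.pderiv_shift p i g).symm
      obtain ⟨x, hx, hgood⟩ := ih (r + 1) (pderiv i g) (MC.pderiv_mem_iterate i hg)
        ⟨e, by rw [hφc]; exact mem_support_iff.mpr hcn, hdeg_e⟩
        (by rw [hφc]; exact hlower)
      refine ⟨x, ?_, hgood⟩
      have harith : r + 1 + t = r + (t + 1) := by omega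
      rwa [harith] at hx
  -- starting data
  have hφf0 : φ f ≠ 0 := fun h => hf0 (hφinj f h)
  have hsne : {m | ∃ d ∈ (φ f).support, (d.sum fun _ e => e) = m}.Nonempty := by
    obtain ⟨d, hd⟩ := support_nonempty.mpr hφf0
    exact ⟨_, d, hd, rfl⟩
  rw [polyOrdAt] at hford
  have hmem := Nat.sInf_mem hsne
  rw [hford] at hmem
  have hlow : ∀ d ∈ (φ f).support, a ≤ d.sum fun _ e => e := by
    intro d hd
    rw [← hford]
    exact Nat.sInf_le ⟨d, hd, rfl⟩
  obtain ⟨t, ht⟩ : ∃ t, a = t + 1 := ⟨a - 1, by omega⟩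
  obtain ⟨x, hx, ⟨d, hd, hd1⟩, hge1⟩ := main t 0 f (by simpa using hfI)
    (by rw [ht] at hmem; exact hmem) (by intro d hd; rw [← ht]; exact hlow d hd)
  refine ⟨x, ?_, ?_⟩
  · have harith : (0 : ℕ) + t = a - 1 := by omega
    rwa [harith] at hx
  · obtain ⟨i, hi⟩ : ∃ i, 1 ≤ d i := MC.deg_pos_exists (by omega)
    have hd_single : d = Finsupp.single i 1 := by
      set e : Fin n →₀ ℕ := d - Finsupp.single i 1 with he
      have hed : e + Finsupp.single i 1 = d :=
        tsub_add_cancel_of_le (Finsupp.single_le_iff.mpr hi)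
      have h3 : (d.sum fun _ n => n) = (e.sum fun _ n => n) + 1 := by
        rw [← hed, MC.deg_add, MC.deg_single]
      have he0 : e = 0 := by
        have hz : (e.sum fun _ n => n) = 0 := by omega
        ext j
        have := MC.deg_le e j
        simp only [Finsupp.coe_zero, Pi.zero_apply]
        omega
      rw [← hed, he0, zero_add]
    refine ⟨i, ?_⟩
    rw [MC.eval_pderiv_shift p i x, ← hd_single]
    exact mem_support_iff.mp hd

lemma MC.mem_of_unit_mul {S : Type*} [CommRing S] {K : Ideal S} {e y : S}
    (hu : IsUnit e) (h : e * y ∈ K) : y ∈ K := by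
  obtain ⟨u, rfl⟩ := hu
  have h2 := K.mul_mem_left (↑u⁻¹) h
  rwa [← mul_assoc, Units.inv_mul, one_mul] at h2

end Mc

/-- Maximal contact passes to the coefficient ideal: if `ord_p(I) = a ≥ 1`, then in the
localization of `R` at `m_p` the image of `D^{a-1}(I)` is contained in the image of
`D^{a!-1}(C(I,a))`; in particular a maximal contact element `x` for `I` at `p` is a maximal
contact element for `C(I,a)` at `p`. -/
theorem maximal_contact_coeffIdeal {k : Type*} [Field k] [CharZero k] {n : ℕ}
    (I : Ideal (MvPolynomial (Fin n) k)) (hI : I ≠ ⊥) (p : Fin n → k) (a : ℕ)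
    (ha : 1 ≤ a) (hord : idealOrdAt p I = a) :
    Ideal.map (algebraMap (MvPolynomial (Fin n) k)
        (Localization.AtPrime (vanishingIdeal p))) (derivIdeal^[a - 1] I) ≤
      Ideal.map (algebraMap (MvPolynomial (Fin n) k)
        (Localization.AtPrime (vanishingIdeal p)))
        (derivIdeal^[Nat.factorial a - 1] (coeffIdeal I a)) ∧
    ∀ x ∈ derivIdeal^[a - 1] I, (∃ i : Fin n, eval p (pderiv i x) ≠ 0) →
      (algebraMap (MvPolynomial (Fin n) k) (Localization.AtPrime (vanishingIdeal p)) x ∈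
        Ideal.map (algebraMap (MvPolynomial (Fin n) k)
          (Localization.AtPrime (vanishingIdeal p)))
          (derivIdeal^[Nat.factorial a - 1] (coeffIdeal I a)) ∧
      ∃ i : Fin n, eval p (pderiv i x) ≠ 0) := by
  classical
  obtain ⟨x, hxJ, i, hxi⟩ := MC.exists_maximal_contact I hI p a ha hord
  set m := Nat.factorial a with hmdef
  have hm1 : 1 ≤ m := Nat.factorial_pos a
  set J := derivIdeal^[a - 1] I with hJ
  set Cc := coeffIdeal I a with hCc
  set π := algebraMap (MvPolynomial (Fin n) k)
    (Localization.AtPrime (vanishingIdeal p)) with hπ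
  have hJC : J ^ m ≤ Cc := MC.pow_le_coeffIdeal I ha
  -- units in the localization
  have hunit : ∀ q : MvPolynomial (Fin n) k, eval p q ≠ 0 → IsUnit (π q) := by
    intro q hq
    have hqc : q ∈ (vanishingIdeal p).primeCompl := by
      intro hmem
      simp only [_root_.vanishingIdeal, SetLike.mem_coe, RingHom.mem_ker] at hmem
      exact hq hmem
    exact IsLocalization.map_units (M := (vanishingIdeal p).primeCompl)
      (Localization.AtPrime (vanishingIdeal p)) ⟨q, hqc⟩
  -- Claim X : derivatives of powers of x
  have claimX : ∀ j s : ℕ, j + s + 1 = m → ∃ c : ℕ, 0 < c ∧ ∃ w : MvPolynomial (Fin n) k,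
      C ((c : ℕ) : k) * (x ^ (s+1) * (pderiv i x) ^ j) + x ^ (s+2) * w
        ∈ derivIdeal^[j] Cc := by
    intro j
    induction j with
    | zero =>
      intro s hs
      refine ⟨1, one_pos, 0, ?_⟩
      have heq : C ((1:ℕ) : k) * (x ^ (s+1) * (pderiv i x) ^ 0) + x ^ (s+2) * 0
          = x ^ (s+1) := by rw [Nat.cast_one, map_one]; ring
      rw [heq, Function.iterate_zero, id_eq]
      have hsm : s + 1 = m := by omega
      have hxp : x ^ (s+1) ∈ J ^ m := by
        rw [← hsm]; exact Ideal.pow_mem_pow hxJ _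
      exact hJC hxp
    | succ j ihj =>
      intro s hs
      obtain ⟨c, hc, w, hw⟩ := ihj (s+1) (by omega)
      have hmem := MC.pderiv_mem_iterate i hw
      refine ⟨c * (s+2), by positivity,
        C ((c : ℕ) : k) * ((j : MvPolynomial (Fin n) k) * (pderiv i x) ^ (j-1)
            * pderiv i (pderiv i x))
          + ((s : MvPolynomial (Fin n) k) + 3) * (pderiv i x) * w + x * pderiv i w, ?_⟩
      have e1 : s + 1 + 2 - 1 = s + 2 := by omega
      have e2 : s + 1 + 1 - 1 = s + 1 := by omega
      have heq : pderiv i (C ((c : ℕ) : k) * (x ^ (s+1+1) * (pderiv i x) ^ j)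
            + x ^ (s+1+2) * w)
          = C ((c * (s+2) : ℕ) : k) * (x ^ (s+1) * (pderiv i x) ^ (j+1)) + x ^ (s+2) *
            (C ((c : ℕ) : k) * ((j : MvPolynomial (Fin n) k) * (pderiv i x) ^ (j-1)
                * pderiv i (pderiv i x))
              + ((s : MvPolynomial (Fin n) k) + 3) * (pderiv i x) * w + x * pderiv i w) := by
        have pc : (pderiv i) (((c : ℕ) : MvPolynomial (Fin n) k)) = 0 := by
          rw [← C_eq_coe_nat]; exact pderiv_C
        simp only [map_add, pderiv_mul, pderiv_pow, pderiv_C, C_eq_coe_nat, pc, zero_mul,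
          mul_zero, zero_add, add_zero, e1, e2]
        push_cast
        ring
      rwa [heq] at hmem
  -- Claim Q : derivatives of f · x^s
  have claimQ : ∀ j s : ℕ, j + s + 1 = m → ∀ f ∈ J,
      ∃ c : ℕ, 0 < c ∧ ∃ w : MvPolynomial (Fin n) k,
      C ((c : ℕ) : k) * (f * x ^ s * (pderiv i x) ^ j) + x ^ (s+1) * w
        ∈ derivIdeal^[j] Cc := by
    intro j
    induction j with
    | zero =>
      intro s hs f hf
      refine ⟨1, one_pos, 0, ?_⟩
      have heq : C ((1:ℕ) : k) * (f * x ^ s * (pderiv i x) ^ 0) + x ^ (s+1) * 0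
          = x ^ s * f := by rw [Nat.cast_one, map_one]; ring
      rw [heq, Function.iterate_zero, id_eq]
      have hsm : s + 1 = m := by omega
      have hxp : x ^ s * f ∈ J ^ m := by
        rw [← hsm, pow_succ]
        exact Ideal.mul_mem_mul (Ideal.pow_mem_pow hxJ _) hf
      exact hJC hxp
    | succ j ihj =>
      intro s hs f hf
      obtain ⟨c, hc, w, hw⟩ := ihj (s+1) (by omega) f hf
      have hmem := MC.pderiv_mem_iterate i hw
      refine ⟨c * (s+1), by positivity,
        C ((c : ℕ) : k) * (pderiv i f * (pderiv i x) ^ j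
            + f * ((j : MvPolynomial (Fin n) k) * (pderiv i x) ^ (j-1)
              * pderiv i (pderiv i x)))
          + ((s : MvPolynomial (Fin n) k) + 2) * (pderiv i x) * w + x * pderiv i w, ?_⟩
      have e1 : s + 1 + 1 - 1 = s + 1 := by omega
      have e2 : s + 1 - 1 = s := by omega
      have heq : pderiv i (C ((c : ℕ) : k) * (f * x ^ (s+1) * (pderiv i x) ^ j)
            + x ^ (s+1+1) * w)
          = C ((c * (s+1) : ℕ) : k) * (f * x ^ s * (pderiv i x) ^ (j+1)) + x ^ (s+1) *
            (C ((c : ℕ) : k) * (pderiv i f * (pderiv i x) ^ j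
                + f * ((j : MvPolynomial (Fin n) k) * (pderiv i x) ^ (j-1)
                  * pderiv i (pderiv i x)))
              + ((s : MvPolynomial (Fin n) k) + 2) * (pderiv i x) * w + x * pderiv i w) := by
        have pc : (pderiv i) (((c : ℕ) : MvPolynomial (Fin n) k)) = 0 := by
          rw [← C_eq_coe_nat]; exact pderiv_C
        simp only [map_add, pderiv_mul, pderiv_pow, pderiv_C, C_eq_coe_nat, pc, zero_mul,
          mul_zero, zero_add, add_zero, e1, e2]
        push_cast
        ring
      rwa [heq] at hmem
  -- Claim L : powers of x lie in the localized derivative ideals of Cc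
  have claimL : ∀ j s : ℕ, j + s + 1 = m →
      π (x ^ (s+1)) ∈ Ideal.map π (derivIdeal^[j] Cc) := by
    intro j
    induction j with
    | zero =>
      intro s hs
      refine Ideal.mem_map_of_mem π ?_
      rw [Function.iterate_zero, id_eq]
      have hsm : s + 1 = m := by omega
      have hxp : x ^ (s+1) ∈ J ^ m := by
        rw [← hsm]; exact Ideal.pow_mem_pow hxJ _
      exact hJC hxp
    | succ j ihj =>
      intro s hs
      obtain ⟨c, hc, w, hw⟩ := claimX (j+1) s hs
      have h1 : π (C ((c : ℕ) : k) * (x ^ (s+1) * (pderiv i x) ^ (j+1)) + x ^ (s+2) * w)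
          ∈ Ideal.map π (derivIdeal^[j+1] Cc) := Ideal.mem_map_of_mem π hw
      have h2 : π (x ^ (s+2) * w) ∈ Ideal.map π (derivIdeal^[j+1] Cc) := by
        rw [map_mul]
        refine Ideal.mul_mem_right _ _ ?_
        exact Ideal.map_mono (MC.iterate_mono (Nat.le_succ j)) (ihj (s+1) (by omega))
      have h3 : π (C ((c : ℕ) : k) * (x ^ (s+1) * (pderiv i x) ^ (j+1)))
          ∈ Ideal.map π (derivIdeal^[j+1] Cc) := by
        have h4 := Ideal.sub_mem _ h1 h2
        rwa [map_add, add_sub_cancel_right] at h4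
      have h5 : π (C ((c : ℕ) : k) * (x ^ (s+1) * (pderiv i x) ^ (j+1)))
          = π (C ((c : ℕ) : k) * (pderiv i x) ^ (j+1)) * π (x ^ (s+1)) := by
        rw [← map_mul]
        ring_nf
      rw [h5] at h3
      refine MC.mem_of_unit_mul (hunit _ ?_) h3
      rw [map_mul, eval_C, map_pow]
      exact mul_ne_zero (Nat.cast_ne_zero.mpr hc.ne') (pow_ne_zero _ hxi)
  -- the main containment
  have key : Ideal.map π J ≤ Ideal.map π (derivIdeal^[m - 1] Cc) := by
    rw [Ideal.map_le_iff_le_comap]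
    intro f hf
    rw [Ideal.mem_comap]
    obtain ⟨c, hc, w, hw⟩ := claimQ (m-1) 0 (by omega) f hf
    have h1 := Ideal.mem_map_of_mem π hw
    have h2 : π (x ^ (0+1) * w) ∈ Ideal.map π (derivIdeal^[m-1] Cc) := by
      rw [map_mul]
      exact Ideal.mul_mem_right _ _ (claimL (m-1) 0 (by omega))
    have h3 : π (C ((c : ℕ) : k) * (f * x ^ 0 * (pderiv i x) ^ (m-1)))
        ∈ Ideal.map π (derivIdeal^[m-1] Cc) := by
      have h4 := Ideal.sub_mem _ h1 h2
      rwa [map_add, add_sub_cancel_right] at h4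
    have h5 : π (C ((c : ℕ) : k) * (f * x ^ 0 * (pderiv i x) ^ (m-1)))
        = π (C ((c : ℕ) : k) * (pderiv i x) ^ (m-1)) * π f := by
      rw [← map_mul]
      ring_nf
    rw [h5] at h3
    refine MC.mem_of_unit_mul (hunit _ ?_) h3
    rw [map_mul, eval_C, map_pow]
    exact mul_ne_zero (Nat.cast_ne_zero.mpr hc.ne') (pow_ne_zero _ hxi)
  exact ⟨key, fun y hy hey => ⟨key (Ideal.mem_map_of_mem π hy), hey⟩⟩
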